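/- For every letter y_s, one has y_s = Σ_{k≥1} (q^{k-1}/k!) Σ_{s'_1+...+s'_k = s, s'_i ≥ 1} π_1(y_{s'_1}) ... π_1(y_{s'_k}), where π_1(y_m) = y_m + Σ_{l≥2} ((-q)^{l-1}/l) Σ_{j_1+...+j_l = m} y_{j_1}...y_{j_l}. -/

import Mathlib

open scoped BigOperators

/-- Words over the alphabet `Y = {y_s : s ≥ 1}`: a word is a list of positive integers. -/
abbrev Word : Type := List ℕ+

/-- The weight of a word `y_{i_1} ⋯ y_{i_r}` is `i_1 + ⋯ + i_r`. -/
def weight (w : Word) : ℕ := (w.map (fun s => (s : ℕ))).sum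

/-- Noncommutative polynomials over `R` on the alphabet `Y`. -/
abbrev NCPoly (R : Type) [CommRing R] : Type := Word →₀ R

variable {R : Type} [CommRing R]

/-- The `q`-stuffle product of two words, as a polynomial. -/
noncomputable def stuf (q : R) : Word → Word → NCPoly R
  | [], v => Finsupp.single v 1
  | u, [] => Finsupp.single u 1
  | s :: u, t :: v =>
      Finsupp.mapDomain (fun w => s :: w) (stuf q u (t :: v)) +
      Finsupp.mapDomain (fun w => t :: w) (stuf q (s :: u) v) +
      q • Finsupp.mapDomain (fun w => (s + t) :: w) (stuf q u v)
  termination_by u v => u.length + v.length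
  decreasing_by all_goals (simp only [List.length_cons]; omega)

/-- Bilinear extension of the `q`-stuffle product to polynomials. -/
noncomputable def stufP (q : R) (P Q : NCPoly R) : NCPoly R :=
  P.sum fun u a => Q.sum fun v b => (a * b) • stuf q u v

/-- Concatenation product of polynomials. -/
noncomputable def concP (P Q : NCPoly R) : NCPoly R :=
  P.sum fun u a => Q.sum fun v b => Finsupp.single (u ++ v) (a * b)

/-- Concatenation product of a list of polynomials. -/
noncomputable def concList : List (NCPoly R) → NCPoly R
  | [] => Finsupp.single [] 1
  | P :: L => concP P (concList L)

/-- `q`-stuffle product of a list of words. -/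
noncomputable def stufList (q : R) : List Word → NCPoly R
  | [] => Finsupp.single [] 1
  | u :: L => stufP q (Finsupp.single u 1) (stufList q L)

/-- A formal power series over `Y` is a function `Word → R`; `S w = ⟨S, w⟩`. -/
def unitS : Word → R := fun w => if w = [] then 1 else 0

/-- Pairing `⟨S, P⟩ = Σ_w ⟨S,w⟩⟨P,w⟩` between a series and a polynomial. -/
noncomputable def pairS (S : Word → R) (P : NCPoly R) : R := P.sum fun w c => c * S w

/-- Pairing between two polynomials. -/
noncomputable def pairP (P Q : NCPoly R) : R := Q.sum fun w c => c * P w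

/-- The finite set of all words of weight `n`. -/
noncomputable def wordsOfWeight : ℕ → Finset Word
  | 0 => {[]}
  | n + 1 =>
      (Finset.range (n + 1)).attach.biUnion fun i =>
        (wordsOfWeight i.1).image fun w => (n + 1 - i.1).toPNat' :: w
  termination_by n => n
  decreasing_by exact Finset.mem_range.mp i.2

/-- All words of weight at most `n`. -/
noncomputable def wordsUpTo (n : ℕ) : Finset Word := (Finset.range (n + 1)).biUnion wordsOfWeight

/-- The `q`-stuffle product of two formal power series (coefficient-wise, the sum
is finite since the `q`-stuffle preserves weight). -/
noncomputable def stufS (q : R) (S T : Word → R) : Word → R :=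
  fun w => ∑ u ∈ wordsUpTo (weight w), ∑ v ∈ wordsUpTo (weight w),
    S u * T v * (stuf q u v) w

/-- `q`-stuffle product of a list of series. -/
noncomputable def stufSList (q : R) (L : List (Word → R)) : Word → R :=
  L.foldr (stufS q) unitS

/-- All ways of writing a word as a concatenation of nonempty words. -/
noncomputable def splits : Word → Finset (List Word)
  | [] => {[]}
  | a :: v =>
      (Finset.range (v.length + 1)).attach.biUnion fun i =>
        (splits (v.drop i.1)).image fun L => (a :: v.take i.1) :: L
  termination_by w => w.length
  decreasing_by simp [List.length_drop] <;> omega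

/-- Lists of length `n` with entries in the finite set `s`. -/
noncomputable def tuples (s : Finset Word) : ℕ → Finset (List Word)
  | 0 => {[]}
  | n + 1 => s.biUnion fun u => (tuples s n).image fun L => u :: L

/-- The Eulerian-type projector `π₁` associated to the `q`-stuffle:
`π₁(w) = Σ_{k≥1} ((-1)^{k-1}/k) Σ_{u_1,…,u_k ∈ Y⁺} ⟨w | u_1 ⊛_q ⋯ ⊛_q u_k⟩ u_1⋯u_k`. -/
noncomputable def qpi1 [Algebra ℚ R] (q : R) (w : Word) : NCPoly R :=
  ∑ v ∈ wordsUpTo (weight w),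
    Finsupp.single v
      (∑ n ∈ Finset.Icc 1 (weight w),
        ((-1 : ℚ) ^ (n - 1) / n) •
          ∑ L ∈ (splits v).filter (fun L => L.length = n), (stufList q L) w)

/-- The adjoint projector `π̌₁`:
`π̌₁(w) = Σ_{k≥1} ((-1)^{k-1}/k) Σ_{u_1⋯u_k = w, u_i ∈ Y⁺} u_1 ⊛_q ⋯ ⊛_q u_k`. -/
noncomputable def qpi1Check [Algebra ℚ R] (q : R) (w : Word) : NCPoly R :=
  ∑ L ∈ splits w, ((-1 : ℚ) ^ (L.length - 1) / (L.length : ℚ)) • stufList q L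

/-- `S` is primitive for the coproduct dual to the `q`-stuffle:
`Δ S = S ⊗ 1 + 1 ⊗ S`, read off on the coefficient at `u ⊗ v`. -/
def IsPrimitive (q : R) (S : Word → R) : Prop :=
  ∀ u v : Word, pairS S (stuf q u v) =
    (if v = [] then S u else 0) + (if u = [] then S v else 0)

/-- `S` is group-like for the coproduct dual to the `q`-stuffle: `Δ S = S ⊗ S`. -/
def IsGroupLike (q : R) (S : Word → R) : Prop :=
  ∀ u v : Word, pairS S (stuf q u v) = S u * S v

/-- Concatenation (Cauchy) product of two series. -/
noncomputable def concS (S T : Word → R) : Word → R :=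
  fun w => ∑ i ∈ Finset.range (w.length + 1), S (w.take i) * T (w.drop i)

/-- Concatenation powers of a series. -/
noncomputable def concPow (S : Word → R) : ℕ → Word → R
  | 0 => unitS
  | n + 1 => concS S (concPow S n)

/-- Formal logarithm `log S = Σ_{n≥1} (-1)^{n-1} (S-1)^n / n` (for `S` with constant term 1,
the sum at a word `w` has at most `|w|` nonzero terms). -/
noncomputable def logS [Algebra ℚ R] (S : Word → R) : Word → R :=
  fun w => ∑ n ∈ Finset.Icc 1 w.length,
    ((-1 : ℚ) ^ (n - 1) / n) • concPow (S - unitS) n w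

/-- The product on `R⟨⟨Y⟩⟩ ⊗^ R⟨⟨Y⟩⟩` where the left factor is multiplied by `⊛_q`
and the right factor by concatenation; a tensor is a function `Word → Word → R`. -/
noncomputable def tmul (q : R) (A B : Word → Word → R) : Word → Word → R :=
  fun w w' => ∑ i ∈ Finset.range (w'.length + 1),
    stufS q (fun u => A u (w'.take i)) (fun u => B u (w'.drop i)) w

/-- The unit `1 ⊗ 1` of the tensor algebra. -/
def unitT : Word → Word → R := fun u v => if u = [] ∧ v = [] then 1 else 0

/-- Powers in the tensor algebra. -/
noncomputable def tpow (q : R) (A : Word → Word → R) : ℕ → Word → Word → R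
  | 0 => unitT
  | n + 1 => tmul q A (tpow q A n)

/-- Formal logarithm in the tensor algebra. -/
noncomputable def logT [Algebra ℚ R] (q : R) (A : Word → Word → R) : Word → Word → R :=
  fun w w' => ∑ n ∈ Finset.Icc 1 w'.length,
    ((-1 : ℚ) ^ (n - 1) / n) • tpow q (A - unitT) n w w'

/-- The diagonal series `D_Y = Σ_w w ⊗ w`. -/
def diagT : Word → Word → R := fun u v => if u = v then 1 else 0

/-- Order on words: lexicographic extension of the order `y_1 > y_2 > ⋯` on letters
(`wlt u v` means `u < v`). -/
def wlt (u v : Word) : Prop := List.Lex (fun a b : ℕ+ => b < a) u v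

/-- A word is Lyndon if it is nonempty and strictly smaller than each of its proper suffixes. -/
def IsLyndon (w : Word) : Prop :=
  w ≠ [] ∧ ∀ i, 0 < i → i < w.length → wlt w (w.drop i)

/-- Index of the standard factorization of a Lyndon word: the right factor is the
longest proper Lyndon suffix. -/
noncomputable def stdIdx (l : Word) : ℕ :=
  sInf {i | 0 < i ∧ i < l.length ∧ IsLyndon (l.drop i)}

/-- The family `Π_l`, for `l` a Lyndon word: `Π_{y_k} = π₁(y_k)`, and
`Π_l = [Π_s, Π_r]` for the standard factorization `l = (s, r)`. -/
noncomputable def PiL [Algebra ℚ R] (q : R) : Word → NCPoly R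
  | [] => Finsupp.single [] 1
  | [s] => qpi1 q [s]
  | a :: b :: w =>
      if h : 0 < stdIdx (a :: b :: w) ∧ stdIdx (a :: b :: w) < (a :: b :: w).length then
        concP (PiL q ((a :: b :: w).take (stdIdx (a :: b :: w))))
              (PiL q ((a :: b :: w).drop (stdIdx (a :: b :: w)))) -
        concP (PiL q ((a :: b :: w).drop (stdIdx (a :: b :: w))))
              (PiL q ((a :: b :: w).take (stdIdx (a :: b :: w))))
      else 0
  termination_by w => w.length
  decreasing_by all_goals (simp only [List.length_take, List.length_drop, List.length_cons] at h ⊢; omega)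

/-- The Lyndon factorization of a word into a nonincreasing product of Lyndon words
(repeatedly take the longest Lyndon prefix). -/
noncomputable def lynFact : Word → List Word
  | [] => []
  | a :: w =>
      (a :: w).take (sSup {i | i ≤ w.length ∧ IsLyndon ((a :: w).take (i + 1))} + 1) ::
      lynFact ((a :: w).drop (sSup {i | i ≤ w.length ∧ IsLyndon ((a :: w).take (i + 1))} + 1))
  termination_by w => w.length
  decreasing_by simp only [List.length_drop, List.length_cons]; omega

/-- The PBW-type basis: `Π_w = Π_{l_1} ⋯ Π_{l_n}` for the Lyndon factorization
`w = l_1 ⋯ l_n`, `l_1 ≥ ⋯ ≥ l_n`. -/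
noncomputable def PiW [Algebra ℚ R] (q : R) (w : Word) : NCPoly R :=
  concList ((lynFact w).map (PiL q))

lemma mem_splits : ∀ (w : Word) (L : List Word), (L ∈ splits w ↔ L.flatten = w ∧ ∀ u ∈ L, u ≠ []) := by
  intro w
  induction w using splits.induct with
  | case1 =>
    intro L
    rw [splits]
    simp only [Finset.mem_singleton]
    constructor
    · rintro rfl; simp
    · rintro ⟨hj, hne⟩
      cases L with
      | nil => rfl
      | cons u L' =>
        exfalso
        cases u with
        | nil => exact hne [] (by simp) rfl
        | cons a u' => simp at hj
  | case2 a v ih =>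
    intro L
    rw [splits]
    simp only [Finset.mem_biUnion, Finset.mem_attach, Finset.mem_image, true_and, Subtype.exists,
      Finset.mem_range]
    constructor
    · rintro ⟨i, hi, L', hL', rfl⟩
      have h2 := (ih ⟨i, Finset.mem_range.mpr hi⟩ L').mp hL'
      refine ⟨?_, ?_⟩
      · have h1 : L'.flatten = List.drop i v := h2.1
        simp only [List.flatten_cons, List.cons_append, h1, List.take_append_drop]
      · intro u hu
        simp only [List.mem_cons] at hu
        rcases hu with h | h
        · subst h; simp
        · exact h2.2 u h
    · rintro ⟨hj, hne⟩
      cases L with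
      | nil => simp at hj
      | cons u L' =>
        cases u with
        | nil => exact absurd rfl (hne [] (by simp))
        | cons b u' =>
          have hj' : b :: (u' ++ L'.flatten) = a :: v := by simpa using hj
          injection hj' with h1 h2
          subst h1; subst h2
          refine ⟨u'.length, by simp, L', ?_, ?_⟩
          · rw [(ih ⟨u'.length, by simp⟩ L')]
            refine ⟨by simp [List.drop_left], fun u hu => hne u (by simp [hu])⟩
          · simp [List.take_left]

open scoped Classical

/-! ### weight basics -/

lemma weight_nil : weight ([] : Word) = 0 := rfl

lemma weight_cons (a : ℕ+) (v : Word) : weight (a :: v) = (a : ℕ) + weight v := by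
  simp [weight]

lemma weight_append (u v : Word) : weight (u ++ v) = weight u + weight v := by
  simp [weight]

lemma weight_eq_zero {v : Word} : weight v = 0 ↔ v = [] := by
  cases v with
  | nil => simp [weight]
  | cons a v =>
    simp only [weight_cons, List.cons_ne_nil, iff_false]
    have := a.pos
    omega

lemma length_le_weight (v : Word) : v.length ≤ weight v := by
  induction v with
  | nil => simp [weight_nil]
  | cons a v ih =>
    rw [weight_cons]
    have := a.pos
    simp only [List.length_cons]
    omega

lemma one_le_weight {v : Word} (h : v ≠ []) : 1 ≤ weight v := by
  have h1 : weight v ≠ 0 := fun hh => h (weight_eq_zero.mp hh)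
  omega

/-! ### Finsupp helpers -/

lemma mapDomain_cons_nil (x : ℕ+) (P : NCPoly R) :
    (Finsupp.mapDomain (fun w : Word => x :: w) P) [] = 0 := by
  apply Finsupp.mapDomain_notin_range
  rintro ⟨w, h⟩
  simp at h

lemma mapDomain_cons_singleton (x m : ℕ+) (P : NCPoly R) :
    (Finsupp.mapDomain (fun w : Word => x :: w) P) [m] = if x = m then P [] else 0 := by
  rcases eq_or_ne x m with rfl | hne
  · rw [if_pos rfl]
    exact Finsupp.mapDomain_apply (List.cons_injective) P []
  · rw [if_neg hne]
    apply Finsupp.mapDomain_notin_range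
    rintro ⟨w, h⟩
    simp only [List.cons.injEq] at h
    exact hne h.1

lemma sum_mul_ite (Q : NCPoly R) (w0 : Word) (c : R) :
    (Q.sum fun v b => b * if v = w0 then c else 0) = Q w0 * c := by
  rw [show (fun (v : Word) (b : R) => b * if v = w0 then c else 0)
      = fun v b => if v = w0 then b * c else 0 by funext v b; split <;> simp]
  rw [Finsupp.sum_ite_eq']
  split
  · rfl
  · rw [Finsupp.notMem_support_iff.mp ‹_›, zero_mul]

/-! ### stuf evaluation lemmas -/

lemma stuf_nil_right (q : R) (u : Word) : stuf q u [] = Finsupp.single u 1 := by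
  cases u with
  | nil => rw [stuf]
  | cons a u => rw [stuf]; simp

lemma stuf_apply_nil (q : R) : ∀ u v : Word, (stuf q u v) [] = if u = [] ∧ v = [] then 1 else 0 := by
  intro u v
  induction u, v using stuf.induct with
  | case1 v =>
    rw [stuf, Finsupp.single_apply]
    by_cases h : v = [] <;> simp [h]
  | case2 u hu =>
    cases u with
    | nil => exact absurd rfl hu
    | cons a u =>
      rw [stuf_nil_right, Finsupp.single_apply]
      simp
  | case3 s u t v ih1 ih2 ih3 =>
    rw [stuf]
    simp only [Finsupp.add_apply, Finsupp.smul_apply, mapDomain_cons_nil, smul_zero]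
    simp

lemma stuf_apply_singleton (q : R) (m : ℕ+) :
    ∀ u v : Word, (stuf q u v) [m] =
      (if u = [] ∧ v = [m] then 1 else 0) + (if v = [] ∧ u = [m] then 1 else 0) +
      (if ∃ a b : ℕ+, u = [a] ∧ v = [b] ∧ a + b = m then q else 0) := by
  intro u v
  induction u, v using stuf.induct with
  | case1 v =>
    rw [stuf, Finsupp.single_apply]
    by_cases h : v = [m] <;> simp [h]
  | case2 u hu =>
    cases u with
    | nil => exact absurd rfl hu
    | cons a u =>
      rw [stuf_nil_right, Finsupp.single_apply]
      by_cases h : a :: u = [m] <;> simp [h]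
  | case3 s u t v ih1 ih2 ih3 =>
    rw [stuf]
    simp only [Finsupp.add_apply, Finsupp.smul_apply, mapDomain_cons_singleton, smul_eq_mul]
    rw [stuf_apply_nil, stuf_apply_nil, stuf_apply_nil]
    have hcond : (∃ a b : ℕ+, s :: u = [a] ∧ t :: v = [b] ∧ a + b = m)
        ↔ (u = [] ∧ v = [] ∧ s + t = m) := by
      constructor
      · rintro ⟨a, b, h1, h2, h3⟩
        simp only [List.cons.injEq] at h1 h2
        obtain ⟨rfl, rfl⟩ := h1; obtain ⟨rfl, rfl⟩ := h2
        exact ⟨rfl, rfl, h3⟩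
      · rintro ⟨rfl, rfl, h3⟩
        exact ⟨s, t, rfl, rfl, h3⟩
    rw [if_congr hcond rfl rfl]
    simp only [List.cons_ne_nil, false_and, if_false, and_false, zero_add, add_zero, mul_ite,
      mul_zero, mul_one]
    by_cases hst : s + t = m
    · rw [if_pos hst]
      by_cases hu0 : u = []
      · by_cases hv0 : v = [] <;> simp [hu0, hv0, hst]
      · simp [hu0, hst]
    · rw [if_neg hst]
      by_cases hu0 : u = [] <;> by_cases hv0 : v = [] <;> simp [hu0, hv0, hst]

/-! ### stufP and stufList evaluation -/

lemma stufP_single_one_apply (q : R) (u : Word) (Q : NCPoly R) (w : Word) :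
    (stufP q (Finsupp.single u 1) Q) w = Q.sum fun v b => b * (stuf q u v) w := by
  rw [stufP, Finsupp.sum_single_index]
  · rw [Finsupp.sum, Finsupp.finset_sum_apply, Finsupp.sum]
    refine Finset.sum_congr rfl fun v hv => ?_
    rw [one_mul, Finsupp.smul_apply, smul_eq_mul]
  · simp [Finsupp.sum]

lemma join_ne_nil {L : List Word} (h : L ≠ []) (hb : ∀ u ∈ L, u ≠ []) : L.flatten ≠ [] := by
  cases L with
  | nil => exact absurd rfl h
  | cons u L' =>
    have hu : u ≠ [] := hb u (by simp)
    simp only [List.flatten_cons]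
    intro hc
    exact hu (List.append_eq_nil_iff.mp hc).1

lemma stufList_cons (q : R) (u : Word) (L : List Word) :
    stufList q (u :: L) = stufP q (Finsupp.single u 1) (stufList q L) := by
  rw [stufList]

lemma stufList_apply_nil (q : R) : ∀ L : List Word, (∀ u ∈ L, u ≠ []) →
    (stufList q L) [] = if L = [] then 1 else 0 := by
  intro L hL
  cases L with
  | nil => rw [stufList]; simp
  | cons u L' =>
    rw [stufList_cons, stufP_single_one_apply]
    have hu : u ≠ [] := hL u (by simp)
    have h0 : (fun (v : Word) (b : R) => b * (stuf q u v) []) = fun v b => 0 := by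
      funext v b
      rw [stuf_apply_nil]
      simp [hu]
    rw [h0]
    simp [Finsupp.sum]

lemma stufList_apply_singleton (q : R) :
    ∀ L : List Word, (∀ u ∈ L, u ≠ []) → ∀ m : ℕ+,
      (stufList q L) [m] =
        if L ≠ [] ∧ (∀ u ∈ L, u.length = 1) ∧ weight L.flatten = (m : ℕ)
        then q ^ (L.length - 1) else 0 := by
  intro L
  induction L with
  | nil =>
    intro _ m
    rw [stufList, Finsupp.single_apply]
    simp
  | cons u L' ih =>
    intro hL m
    have hu : u ≠ [] := hL u (by simp)
    have hL' : ∀ v ∈ L', v ≠ [] := fun v hv => hL v (by simp [hv])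
    obtain ⟨a, u'', rfl⟩ := List.exists_cons_of_ne_nil hu
    rw [stufList_cons, stufP_single_one_apply]
    have hsplit : (fun (v : Word) (b : R) => b * (stuf q (a :: u'') v) [m]) =
        fun v b => (b * if v = [] ∧ a :: u'' = [m] then (1:R) else 0) +
          (b * if ∃ a' b' : ℕ+, a :: u'' = [a'] ∧ v = [b'] ∧ a' + b' = m then q else 0) := by
      funext v b
      rw [stuf_apply_singleton]
      simp [mul_add]
    rw [hsplit, Finsupp.sum_add]
    -- the A term
    have hA : ((stufList q L').sum fun v b => b * if v = [] ∧ a :: u'' = [m] then (1:R) else 0) =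
        if a :: u'' = [m] ∧ L' = [] then 1 else 0 := by
      by_cases hum : a :: u'' = [m]
      · have e1 : (fun (v : Word) (b : R) => b * if v = [] ∧ a :: u'' = [m] then (1:R) else 0) =
            fun v b => b * if v = [] then (1:R) else 0 := by
          funext v b; simp [hum]
        rw [e1, sum_mul_ite, stufList_apply_nil q L' hL', mul_one]
        simp [hum]
      · have e1 : (fun (v : Word) (b : R) => b * if v = [] ∧ a :: u'' = [m] then (1:R) else 0) =
            fun v b => 0 := by
          funext v b; simp [hum]
        rw [e1]
        simp [Finsupp.sum, hum]
    rw [hA]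
    have hjoin : weight ((a :: u'') :: L').flatten = (a : ℕ) + weight u'' + weight L'.flatten := by
      simp only [List.flatten_cons, weight_append, weight_cons]
      try ring
    by_cases hu1 : u'' = []
    · subst hu1
      by_cases ham : (a : ℕ) < (m : ℕ)
      · -- A term is zero since a ≠ m
        have hane : ¬(a :: ([] : List ℕ+) = [m] ∧ L' = []) := by
          rintro ⟨h1, _⟩
          have : a = m := by injection h1
          subst this
          omega
        rw [if_neg hane, zero_add]
        set b0 : ℕ+ := ⟨(m : ℕ) - (a : ℕ), by omega⟩ with hb0
        have hb0c : (b0 : ℕ) = (m : ℕ) - (a : ℕ) := rfl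
        have hcond : ∀ v : Word,
            (∃ a' b' : ℕ+, a :: ([] : List ℕ+) = [a'] ∧ v = [b'] ∧ a' + b' = m) ↔ v = [b0] := by
          intro v
          constructor
          · rintro ⟨a', b', h1, rfl, h3⟩
            have ha' : a' = a := by injection h1 with h1a _; exact h1a.symm
            subst ha'
            have h4 := congrArg (fun x : ℕ+ => (x : ℕ)) h3
            push_cast at h4
            have : b' = b0 := by
              apply PNat.coe_injective
              rw [hb0c]
              omega
            rw [this]
          · rintro rfl
            refine ⟨a, b0, rfl, rfl, ?_⟩
            apply PNat.coe_injective
            push_cast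
            rw [hb0c]
            omega
        have e2 : (fun (v : Word) (b : R) =>
            b * if ∃ a' b' : ℕ+, a :: ([] : List ℕ+) = [a'] ∧ v = [b'] ∧ a' + b' = m
                then q else 0) = fun v b => b * if v = [b0] then q else 0 := by
          funext v b
          rw [if_congr (hcond v) rfl rfl]
        rw [e2, sum_mul_ite, ih hL' b0]
        by_cases hL'0 : L' = []
        · subst hL'0
          rw [if_neg (by simp), zero_mul]
          rw [if_neg ?_]
          rintro ⟨_, _, h3⟩
          rw [hjoin] at h3
          simp only [List.flatten_nil, weight_nil, add_zero] at h3
          omega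
        · by_cases hcnd : (∀ v ∈ L', v.length = 1) ∧ weight L'.flatten = (b0 : ℕ)
          · rw [if_pos ⟨hL'0, hcnd.1, hcnd.2⟩, if_pos ?_]
            · rw [mul_comm, ← pow_succ']
              congr 1
              have h1 : 1 ≤ L'.length := List.length_pos_iff.mpr hL'0
              simp only [List.length_cons]
              omega
            · refine ⟨by simp, ?_, ?_⟩
              · intro v hv
                rcases List.mem_cons.mp hv with rfl | h
                · simp
                · exact hcnd.1 v h
              · rw [hjoin, hcnd.2, hb0c]
                simp only [weight_nil, add_zero]
                omega
          · rw [if_neg (by rintro ⟨_, h2, h3⟩; exact hcnd ⟨h2, h3⟩), zero_mul, if_neg ?_]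
            rintro ⟨_, h2, h3⟩
            apply hcnd
            refine ⟨fun v hv => h2 v (by simp [hv]), ?_⟩
            rw [hjoin] at h3
            rw [hb0c]
            simp only [weight_nil, add_zero] at h3
            omega
      · -- ¬ (a < m) : B term vanishes
        have e3 : (fun (v : Word) (b : R) =>
            b * if ∃ a' b' : ℕ+, a :: ([] : List ℕ+) = [a'] ∧ v = [b'] ∧ a' + b' = m
                then q else 0) = fun v b => 0 := by
          funext v b
          rw [if_neg, mul_zero]
          rintro ⟨a', b', h1, h2, h3⟩
          have ha' : a' = a := by injection h1 with h1a _; exact h1a.symm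
          subst ha'
          have h4 := congrArg (fun x : ℕ+ => (x : ℕ)) h3
          push_cast at h4
          have := b'.pos
          omega
        rw [e3, show ((stufList q L').sum fun (v : Word) (b : R) => (0:R)) = 0 by
          simp [Finsupp.sum], add_zero]
        by_cases haeq : a = m
        · subst haeq
          by_cases hL'0 : L' = []
          · subst hL'0
            rw [if_pos ⟨rfl, rfl⟩, if_pos ?_]
            · simp
            · refine ⟨by simp, by intro v hv; simp at hv; rw [hv]; simp, ?_⟩
              rw [hjoin]
              simp only [List.flatten_nil, weight_nil, add_zero]
          · rw [if_neg (fun h => hL'0 h.2), if_neg ?_]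
            rintro ⟨_, _, h3⟩
            rw [hjoin] at h3
            have := one_le_weight (join_ne_nil hL'0 hL')
            simp only [weight_nil, add_zero] at h3
            omega
        · have hane : a :: ([] : List ℕ+) ≠ [m] := by
            intro h; exact haeq (by injection h)
          rw [if_neg (fun h => hane h.1), if_neg ?_]
          rintro ⟨_, _, h3⟩
          rw [hjoin] at h3
          simp only [weight_nil, add_zero] at h3
          by_cases hL'0 : L' = []
          · subst hL'0
            rw [show weight (([] : List Word)).flatten = 0 from rfl] at h3
            exact haeq (PNat.coe_injective (by omega))
          · have := one_le_weight (join_ne_nil hL'0 hL')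
            omega
    · -- u'' ≠ [] : everything vanishes
      have hane : ¬(a :: u'' = [m] ∧ L' = []) := by
        rintro ⟨h1, _⟩
        injection h1 with _ h2
        exact hu1 h2
      rw [if_neg hane, zero_add]
      have e4 : (fun (v : Word) (b : R) =>
          b * if ∃ a' b' : ℕ+, a :: u'' = [a'] ∧ v = [b'] ∧ a' + b' = m then q else 0) =
          fun v b => 0 := by
        funext v b
        rw [if_neg, mul_zero]
        rintro ⟨a', b', h1, _, _⟩
        injection h1 with _ h2
        exact hu1 h2
      rw [e4, show ((stufList q L').sum fun (v : Word) (b : R) => (0:R)) = 0 by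
        simp [Finsupp.sum]]
      rw [if_neg ?_]
      rintro ⟨_, h2, _⟩
      have := h2 (a :: u'') (by simp)
      simp only [List.length_cons] at this
      have hz : u''.length = 0 := by omega
      exact hu1 (List.length_eq_zero_iff.mp hz)

lemma mem_wordsOfWeight : ∀ (n : ℕ) (v : Word), v ∈ wordsOfWeight n ↔ weight v = n := by
  intro n
  induction n using wordsOfWeight.induct with
  | case1 =>
    intro v
    rw [wordsOfWeight]
    simp only [Finset.mem_singleton]
    exact ⟨fun h => by subst h; rfl, fun h => weight_eq_zero.mp h⟩
  | case2 n ih =>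
    intro v
    show v ∈ wordsOfWeight (n + 1) ↔ _
    rw [wordsOfWeight]
    simp only [Finset.mem_biUnion, Finset.mem_attach, true_and, Finset.mem_image,
      Subtype.exists, Finset.mem_range]
    constructor
    · rintro ⟨i, hi, v', hv', rfl⟩
      have hw : weight v' = i := (ih ⟨i, Finset.mem_range.mpr hi⟩ v').mp hv'
      rw [weight_cons, hw]
      rw [Nat.toPNat'_coe, if_pos (by omega)]
      omega
    · intro hv
      cases v with
      | nil => simp [weight_nil] at hv
      | cons a v' =>
        rw [weight_cons] at hv
        have ha := a.pos
        have hwv' : weight v' < n + 1 := by omega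
        refine ⟨weight v', hwv', v', (ih ⟨weight v', Finset.mem_range.mpr hwv'⟩ v').mpr rfl, ?_⟩
        congr 1
        apply PNat.coe_injective
        rw [Nat.toPNat'_coe, if_pos (by omega)]
        omega

lemma mem_wordsUpTo (n : ℕ) (v : Word) : v ∈ wordsUpTo n ↔ weight v ≤ n := by
  rw [wordsUpTo]
  simp only [Finset.mem_biUnion, Finset.mem_range]
  constructor
  · rintro ⟨i, hi, hv⟩
    rw [(mem_wordsOfWeight i v).mp hv]
    omega
  · intro h
    exact ⟨weight v, by omega, (mem_wordsOfWeight (weight v) v).mpr rfl⟩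

lemma join_map_singleton (v : Word) : (v.map (fun a => ([a] : Word))).flatten = v := by
  induction v with
  | nil => rfl
  | cons a v ih => simp [ih]

lemma splits_singleton_blocks :
    ∀ (L : List Word) (v : Word), L.flatten = v → (∀ u ∈ L, u ≠ []) → (∀ u ∈ L, u.length = 1) →
      L = v.map (fun a => ([a] : Word)) := by
  intro L
  induction L with
  | nil =>
    rintro v rfl _ _
    rfl
  | cons u L' ih =>
    rintro v rfl hne h1
    have hu1 : u.length = 1 := h1 u (by simp)
    obtain ⟨a, rfl⟩ : ∃ a, u = [a] := by
      cases u with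
      | nil => simp at hu1
      | cons a u' =>
        simp only [List.length_cons] at hu1
        exact ⟨a, by rw [List.length_eq_zero_iff.mp (by omega : u'.length = 0)]⟩
    have := ih L'.flatten rfl (fun x hx => hne x (by simp [hx])) (fun x hx => h1 x (by simp [hx]))
    simp only [List.flatten_cons, List.singleton_append, List.map_cons]
    rw [← this]

lemma sum_single_apply (s : Finset Word) (c : Word → R) (v : Word) :
    (∑ v' ∈ s, Finsupp.single v' (c v')) v = if v ∈ s then c v else 0 := by
  rw [Finsupp.finset_sum_apply]
  rw [show (fun v' => (Finsupp.single v' (c v') : NCPoly R) v) = fun v' => if v' = v then c v' else 0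
    from funext fun v' => Finsupp.single_apply]
  exact Finset.sum_ite_eq' s v c

lemma qpi1_apply [Algebra ℚ R] (q : R) (m : ℕ+) (v : Word) :
    (qpi1 q [m]) v = if weight v = (m : ℕ)
      then ((-1 : ℚ) ^ (v.length - 1) / v.length) • (q ^ (v.length - 1)) else 0 := by
  have hwm : weight [m] = (m : ℕ) := by simp [weight_cons, weight_nil]
  rw [qpi1, hwm, sum_single_apply]
  by_cases hw : weight v = (m : ℕ)
  · rw [if_pos hw, if_pos ((mem_wordsUpTo (m : ℕ) v).mpr (le_of_eq hw))]
    have hvne : v ≠ [] := by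
      intro h
      subst h
      rw [weight_nil] at hw
      exact absurd hw.symm (by have := m.pos; omega)
    have hvlen1 : 1 ≤ v.length := List.length_pos_iff.mpr hvne
    have hvlenm : v.length ≤ (m : ℕ) := hw ▸ length_le_weight v
    have hinner : ∀ n ∈ Finset.Icc 1 (m : ℕ),
        (∑ L ∈ (splits v).filter (fun L => L.length = n), (stufList q L) [m]) =
          if n = v.length then q ^ (v.length - 1) else 0 := by
      intro n _
      set Lv : List Word := v.map (fun a => ([a] : Word)) with hLv
      have hLvmem : Lv ∈ splits v := by
        rw [mem_splits]
        refine ⟨join_map_singleton v, ?_⟩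
        intro u hu
        simp only [hLv, List.mem_map] at hu
        obtain ⟨a, _, rfl⟩ := hu
        simp
      have hLvlen : Lv.length = v.length := by simp [hLv]
      have hterm : ∀ L ∈ (splits v).filter (fun L => L.length = n), L ≠ Lv →
          (stufList q L) [m] = 0 := by
        intro L hL hLne
        rw [Finset.mem_filter] at hL
        obtain ⟨hLs, hLn⟩ := hL
        have hmem := (mem_splits v L).mp hLs
        rw [stufList_apply_singleton q L hmem.2 m, if_neg]
        rintro ⟨hne0, hlen1, _⟩
        exact hLne (splits_singleton_blocks L v hmem.1 hmem.2 hlen1)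
      by_cases hn : n = v.length
      · subst hn
        rw [Finset.sum_eq_single_of_mem Lv (Finset.mem_filter.mpr ⟨hLvmem, hLvlen⟩) hterm]
        rw [stufList_apply_singleton q Lv (((mem_splits v Lv).mp hLvmem)).2 m, if_pos, if_pos rfl,
          hLvlen]
        refine ⟨?_, ?_, ?_⟩
        · simp [hLv, hvne]
        · intro u hu
          simp only [hLv, List.mem_map] at hu
          obtain ⟨a, _, rfl⟩ := hu
          rfl
        · rw [join_map_singleton, hw]
      · rw [if_neg hn, Finset.sum_eq_zero]
        intro L hL
        apply hterm L hL
        intro h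
        subst h
        rw [Finset.mem_filter] at hL
        exact hn (hLvlen ▸ hL.2.symm)
    rw [Finset.sum_congr rfl fun n hn => by rw [hinner n hn]]
    rw [show (fun n => ((-1 : ℚ) ^ (n - 1) / ↑n) • (if n = v.length then q ^ (v.length - 1) else 0))
        = fun n => if n = v.length then ((-1 : ℚ) ^ (n - 1) / ↑n) • q ^ (v.length - 1) else 0 by
      funext n; split <;> simp]
    rw [Finset.sum_ite_eq' (Finset.Icc 1 (m : ℕ)) v.length
      (fun n => ((-1 : ℚ) ^ (n - 1) / ↑n) • q ^ (v.length - 1))]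
    rw [if_pos (Finset.mem_Icc.mpr ⟨hvlen1, hvlenm⟩)]
  · rw [if_neg hw]
    split
    · rw [Finset.sum_eq_zero]
      intro n _
      rw [smul_eq_zero]
      right
      apply Finset.sum_eq_zero
      intro L hL
      rw [Finset.mem_filter] at hL
      have hmem := (mem_splits v L).mp hL.1
      rw [stufList_apply_singleton q L hmem.2 m, if_neg]
      rintro ⟨_, _, h3⟩
      rw [hmem.1] at h3
      exact hw h3
    · rfl

lemma concP_apply (P Q : NCPoly R) (w : Word) :
    (concP P Q) w = ∑ i ∈ Finset.range (w.length + 1), P (w.take i) * Q (w.drop i) := by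
  rw [concP, Finsupp.sum, Finsupp.finset_sum_apply]
  have e1 : ∀ u : Word, (Finsupp.sum Q fun v b => Finsupp.single (u ++ v) (P u * b)) w
      = ∑ v ∈ Q.support, if u ++ v = w then P u * Q v else 0 := by
    intro u
    rw [Finsupp.sum, Finsupp.finset_sum_apply]
    exact Finset.sum_congr rfl fun v _ => Finsupp.single_apply
  rw [Finset.sum_congr rfl fun u _ => e1 u]
  rw [← Finset.sum_product']
  rw [← Finset.sum_filter]
  have e2 : ∑ i ∈ Finset.range (w.length + 1), P (w.take i) * Q (w.drop i) =
      ∑ i ∈ (Finset.range (w.length + 1)).filter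
        (fun i => w.take i ∈ P.support ∧ w.drop i ∈ Q.support), P (w.take i) * Q (w.drop i) := by
    rw [Finset.sum_filter_of_ne]
    intro i _ hne
    exact ⟨Finsupp.mem_support_iff.mpr (fun h0 => hne (by rw [h0, zero_mul])),
      Finsupp.mem_support_iff.mpr (fun h0 => hne (by rw [h0, mul_zero]))⟩
  rw [e2]
  refine Finset.sum_nbij' (fun p => p.1.length) (fun i => (w.take i, w.drop i)) ?_ ?_ ?_ ?_ ?_
  · rintro ⟨u, v⟩ hp
    simp only [Finset.mem_filter, Finset.mem_product] at hp
    obtain ⟨⟨hu, hv⟩, hw⟩ := hp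
    simp only [Finset.mem_filter, Finset.mem_range]
    subst hw
    refine ⟨by simp, ?_, ?_⟩
    · rw [List.take_left]; exact hu
    · rw [List.drop_left]; exact hv
  · intro i hi
    simp only [Finset.mem_filter, Finset.mem_range] at hi
    simp only [Finset.mem_filter, Finset.mem_product]
    exact ⟨⟨hi.2.1, hi.2.2⟩, List.take_append_drop i w⟩
  · rintro ⟨u, v⟩ hp
    simp only [Finset.mem_filter, Finset.mem_product] at hp
    obtain ⟨_, hw⟩ := hp
    subst hw
    simp [List.take_left, List.drop_left]
  · intro i hi
    simp only [Finset.mem_filter, Finset.mem_range] at hi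
    simp only [List.length_take]
    omega
  · rintro ⟨u, v⟩ hp
    simp only [Finset.mem_filter, Finset.mem_product] at hp
    obtain ⟨_, hw⟩ := hp
    subst hw
    rw [List.take_left, List.drop_left]

lemma concList_cons (P : NCPoly R) (L : List (NCPoly R)) :
    concList (P :: L) = concP P (concList L) := by
  rw [concList]

lemma mem_splits' : ∀ (w : Word) (L : List Word),
    (L ∈ splits w ↔ L.flatten = w ∧ ∀ u ∈ L, u ≠ []) := mem_splits

lemma concList_apply [Algebra ℚ R] (q : R) :
    ∀ (c : List ℕ+) (w : Word),
      (concList (c.map (fun m => qpi1 q [m]))) w =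
        ∑ L ∈ (splits w).filter (fun L => L.map weight = c.map PNat.val),
          (L.map (fun u => ((-1 : ℚ) ^ (u.length - 1) / u.length) • (q ^ (u.length - 1)))).prod := by
  intro c
  induction c with
  | nil =>
    intro w
    rw [List.map_nil, concList, Finsupp.single_apply]
    by_cases hw : w = []
    · subst hw
      rw [if_pos rfl]
      rw [show splits [] = {[]} by rw [splits]]
      rw [show ({[]} : Finset (List Word)).filter
          (fun L => L.map weight = ([] : List ℕ+).map PNat.val) = {[]} by
        rw [Finset.filter_singleton, if_pos (by simp)]]
      simp
    · rw [if_neg (fun h => hw h.symm)]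
      symm
      apply Finset.sum_eq_zero
      intro L hL
      exfalso
      rw [Finset.mem_filter] at hL
      have h1 := (mem_splits' w L).mp hL.1
      have h2 : L = [] := by
        have h3 : List.map weight L = [] := by simpa using hL.2
        exact List.map_eq_nil_iff.mp h3
      subst h2
      exact hw h1.1.symm
  | cons m c' ih =>
    intro w
    rw [List.map_cons, concList_cons, concP_apply]
    have e1 : ∀ i ∈ Finset.range (w.length + 1),
        (qpi1 q [m]) (w.take i) * (concList (c'.map (fun m => qpi1 q [m]))) (w.drop i) =
        if weight (w.take i) = (m : ℕ) then
          (((-1 : ℚ) ^ ((w.take i).length - 1) / (w.take i).length) •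
            (q ^ ((w.take i).length - 1))) *
          ∑ L ∈ (splits (w.drop i)).filter
              (fun L => L.map weight = c'.map PNat.val),
            (L.map (fun u => ((-1 : ℚ) ^ (u.length - 1) / u.length) •
              (q ^ (u.length - 1)))).prod
        else 0 := by
      intro i _
      rw [qpi1_apply, ih (w.drop i), ite_mul, zero_mul]
    rw [Finset.sum_congr rfl e1, ← Finset.sum_filter]
    rw [Finset.sum_congr rfl (fun i _ => Finset.mul_sum _ _ _)]
    rw [Finset.sum_sigma']
    refine Finset.sum_nbij' (fun p => (w.take p.1) :: p.2) (fun L => ⟨L.headI.length, L.tail⟩)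
      ?_ ?_ ?_ ?_ ?_
    · rintro ⟨i, L'⟩ hp
      simp only [Finset.mem_sigma, Finset.mem_filter, Finset.mem_range] at hp
      obtain ⟨⟨hi, hwt⟩, hL's, hL'p⟩ := hp
      have hmem := (mem_splits' (w.drop i) L').mp hL's
      rw [Finset.mem_filter]
      constructor
      · rw [mem_splits']
        constructor
        · simp only [List.flatten_cons]
          rw [hmem.1, List.take_append_drop]
        · intro u hu
          rcases List.mem_cons.mp hu with rfl | h
          · intro h0
            rw [h0, weight_nil] at hwt
            have := m.pos
            omega
          · exact hmem.2 u h
      · simp only [List.map_cons, hwt, hL'p]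
    · intro L hL
      rw [Finset.mem_filter] at hL
      obtain ⟨hLs, hLp⟩ := hL
      have hLne : L ≠ [] := by
        intro h
        subst h
        simp at hLp
      obtain ⟨u, L', rfl⟩ := List.exists_cons_of_ne_nil hLne
      have hmem := (mem_splits' w (u :: L')).mp hLs
      simp only [List.map_cons, List.cons.injEq] at hLp
      have hjoin : u ++ L'.flatten = w := by
        simpa using hmem.1
      simp only [List.headI, List.tail_cons, Finset.mem_sigma, Finset.mem_filter,
        Finset.mem_range]
      refine ⟨⟨?_, ?_⟩, ?_, ?_⟩
      · rw [← hjoin]; simp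
      · rw [← hjoin, List.take_left]; exact hLp.1
      · rw [mem_splits']
        refine ⟨?_, fun v hv => hmem.2 v (by simp [hv])⟩
        rw [← hjoin, List.drop_left]
      · exact hLp.2
    · rintro ⟨i, L'⟩ hp
      simp only [Finset.mem_sigma, Finset.mem_filter, Finset.mem_range] at hp
      obtain ⟨⟨hi, _⟩, _, _⟩ := hp
      simp only [List.headI, List.tail_cons]
      congr 1
      rw [List.length_take]
      omega
    · intro L hL
      rw [Finset.mem_filter] at hL
      have hLne : L ≠ [] := by
        intro h
        subst h
        simp at hL
      obtain ⟨u, L', rfl⟩ := List.exists_cons_of_ne_nil hLne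
      have hmem := (mem_splits' w (u :: L')).mp hL.1
      have hjoin : u ++ L'.flatten = w := by simpa using hmem.1
      simp only [List.headI, List.tail_cons, List.cons.injEq]
      rw [← hjoin, List.take_left]
      simp
    · rintro ⟨i, L'⟩ hp
      simp only [List.map_cons, List.prod_cons]

lemma sum_splits_cons {M : Type} [AddCommMonoid M] (a : ℕ+) (v : Word) (f : List ℕ → M) :
    (∑ L ∈ splits (a :: v), f (L.map List.length)) =
      ∑ i ∈ Finset.range (v.length + 1), ∑ L' ∈ splits (v.drop i),
        f ((i + 1) :: L'.map List.length) := by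
  rw [show splits (a :: v) = (Finset.range (v.length + 1)).attach.biUnion fun i =>
        (splits (v.drop i.1)).image fun L => (a :: v.take i.1) :: L by rw [splits]]
  rw [Finset.sum_biUnion]
  · rw [← Finset.sum_attach (Finset.range (v.length + 1))
      (fun i => ∑ L' ∈ splits (v.drop i), f ((i + 1) :: L'.map List.length))]
    refine Finset.sum_congr rfl fun x _ => ?_
    rw [Finset.sum_image (fun L1 _ L2 _ h => by injection h)]
    refine Finset.sum_congr rfl fun L' _ => ?_
    congr 1
    have hx : x.1 ≤ v.length := by
      have := x.2
      rw [Finset.mem_range] at this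
      omega
    simp only [List.map_cons, List.length_cons, List.length_take]
    congr 2
    omega
  · intro x _ y _ hxy
    simp only [Function.onFun]
    rw [Finset.disjoint_left]
    intro L hLx hLy
    rw [Finset.mem_image] at hLx hLy
    obtain ⟨L1, _, h1⟩ := hLx
    obtain ⟨L2, _, h2⟩ := hLy
    apply hxy
    have hx : x.1 ≤ v.length := by have := x.2; rw [Finset.mem_range] at this; omega
    have hy : y.1 ≤ v.length := by have := y.2; rw [Finset.mem_range] at this; omega
    have h3 : (a :: v.take x.1) = (a :: v.take y.1) := by
      rw [← h2] at h1
      injection h1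
    have h4 : v.take x.1 = v.take y.1 := by injection h3
    have h5 : x.1 = y.1 := by
      have := congrArg List.length h4
      simp only [List.length_take] at this
      omega
    exact Subtype.ext h5

lemma splits_sum_length {M : Type} [AddCommMonoid M] :
    ∀ (N : ℕ) (w w' : Word), w.length = N → w'.length = N → ∀ (f : List ℕ → M),
      (∑ L ∈ splits w, f (L.map List.length)) = ∑ L ∈ splits w', f (L.map List.length) := by
  intro N
  induction N using Nat.strong_induction_on with
  | _ N ih =>
    intro w w' hw hw' f
    cases w with
    | nil =>
      cases w' with
      | nil => rfl
      | cons a' v' => rw [← hw'] at hw; simp at hw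
    | cons a v =>
      cases w' with
      | nil => rw [← hw] at hw'; simp at hw'
      | cons a' v' =>
        have hN : N = v.length + 1 := by rw [← hw]; rfl
        have hvv' : v.length = v'.length := by
          have : v'.length + 1 = N := by rw [← hw']; rfl
          omega
        rw [sum_splits_cons, sum_splits_cons, ← hvv']
        refine Finset.sum_congr rfl fun i hi => ?_
        rw [Finset.mem_range] at hi
        exact ih (v.length - i) (by omega) (v.drop i) (v'.drop i)
          (by rw [List.length_drop]) (by rw [List.length_drop]; omega)
          (fun c => f ((i + 1) :: c))

/-! ### The exp-log combinatorial identity -/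

noncomputable def gq (k : ℕ) : ℚ := (-1) ^ (k - 1) / k

noncomputable def fC (c : List ℕ) : ℚ := (1 / (Nat.factorial c.length)) * (c.map gq).prod

noncomputable def Er (r : ℕ) : ℚ :=
  ∑ L ∈ splits (List.replicate r (1 : ℕ+)), fC (L.map List.length)

lemma sum_eq_range_getD (c : List ℕ) : c.sum = ∑ k ∈ Finset.range c.length, c.getD k 0 := by
  induction c with
  | nil => simp
  | cons a t ih =>
    rw [List.sum_cons, List.length_cons, Finset.sum_range_succ', ih]
    simp only [List.getD_cons_succ, List.getD_cons_zero]
    omega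

lemma headI_rotate (c : List ℕ) (k : ℕ) (hk : k < c.length) : (c.rotate k).headI = c.getD k 0 := by
  have h0 : 0 < (c.rotate k).length := by rw [List.length_rotate]; omega
  obtain ⟨b, t, h⟩ : ∃ b t, c.rotate k = b :: t := by
    cases hh : c.rotate k with
    | nil => rw [hh] at h0; simp at h0
    | cons b t => exact ⟨b, t, rfl⟩
  have h1 : (c.rotate k)[0]'h0 = b := by simp [h]
  rw [List.getElem_rotate] at h1
  rw [h, List.headI]
  rw [List.getD_eq_getElem c 0 hk]
  rw [← h1]
  have h2 : (0 + k) % c.length = k := by rw [Nat.zero_add, Nat.mod_eq_of_lt hk]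
  congr 1

lemma fC_rotate (c : List ℕ) (k : ℕ) : fC (c.rotate k) = fC c := by
  rw [fC, fC, List.length_rotate]
  congr 1
  exact List.Perm.prod_eq ((c.rotate_perm k).map gq)

lemma sum_map_length_of_splits {w : Word} {L : List Word} (h : L ∈ splits w) :
    (L.map List.length).sum = w.length := by
  have h1 := (mem_splits' w L).mp h
  rw [← h1.1, List.length_flatten]

lemma length_le_sum_lengths : ∀ L : List Word, (∀ u ∈ L, u ≠ []) →
    L.length ≤ (L.map List.length).sum := by
  intro L
  induction L with
  | nil => simp
  | cons u L' ih =>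
    intro h
    have hu : 0 < u.length := List.length_pos_iff.mpr (h u (by simp))
    have := ih (fun x hx => h x (by simp [hx]))
    simp only [List.map_cons, List.sum_cons, List.length_cons]
    omega

lemma length_le_of_splits {w : Word} {L : List Word} (h : L ∈ splits w) :
    L.length ≤ w.length := by
  have h1 := (mem_splits' w L).mp h
  calc L.length ≤ (L.map List.length).sum := length_le_sum_lengths L h1.2
  _ = w.length := sum_map_length_of_splits h

lemma rotate_mem_splits_rep {r k : ℕ} {L : List Word}
    (h : L ∈ splits (List.replicate r (1 : ℕ+))) :
    L.rotate k ∈ splits (List.replicate r (1 : ℕ+)) := by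
  obtain ⟨h1, h2⟩ := (mem_splits' _ L).mp h
  rw [mem_splits']
  refine ⟨?_, fun u hu => h2 u (List.mem_rotate.mp hu)⟩
  rw [List.eq_replicate_iff]
  constructor
  · rw [List.length_flatten, List.map_rotate]
    rw [List.Perm.sum_eq (((L.map List.length).rotate_perm k))]
    rw [← List.length_flatten, h1, List.length_replicate]
  · intro b hb
    rw [List.mem_flatten] at hb
    obtain ⟨u, hu, hbu⟩ := hb
    have : b ∈ L.flatten := List.mem_flatten.mpr ⟨u, List.mem_rotate.mp hu, hbu⟩
    rw [h1] at this
    exact List.eq_of_mem_replicate this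

lemma sum_rotate_fiber (r n k : ℕ) (g : List Word → ℚ) :
    (∑ L ∈ (splits (List.replicate r (1 : ℕ+))).filter (fun L => L.length = n), g (L.rotate k)) =
    ∑ L ∈ (splits (List.replicate r (1 : ℕ+))).filter (fun L => L.length = n), g L := by
  have key : ∀ (L : List Word), L.length = n → L.rotate (k + (n - k % n)) = L := by
    intro L hL
    rcases Nat.eq_zero_or_pos n with hn | hn
    · subst hn
      rw [List.length_eq_zero_iff.mp hL]
      simp
    · have hmod : k % n < n := Nat.mod_lt _ hn
      have hdiv := Nat.div_add_mod k n
      have he : k + (n - k % n) = n * (k / n + 1) := by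
        rw [Nat.mul_add, Nat.mul_one]
        omega
      rw [he, ← hL, ← List.rotate_mod, hL, Nat.mul_mod_right, List.rotate_zero]
  have key2 : ∀ (L : List Word), L.length = n → L.rotate ((n - k % n) + k) = L := by
    intro L hL
    rw [Nat.add_comm]
    exact key L hL
  refine Finset.sum_nbij' (fun L => L.rotate k) (fun L => L.rotate (n - k % n)) ?_ ?_ ?_ ?_ ?_
  · intro L hL
    rw [Finset.mem_filter] at hL ⊢
    exact ⟨rotate_mem_splits_rep hL.1, by rw [List.length_rotate]; exact hL.2⟩
  · intro L hL
    rw [Finset.mem_filter] at hL ⊢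
    exact ⟨rotate_mem_splits_rep hL.1, by rw [List.length_rotate]; exact hL.2⟩
  · intro L hL
    rw [Finset.mem_filter] at hL
    show (L.rotate k).rotate (n - k % n) = L
    rw [List.rotate_rotate]
    exact key L hL.2
  · intro L hL
    rw [Finset.mem_filter] at hL
    show (L.rotate (n - k % n)).rotate k = L
    rw [List.rotate_rotate]
    exact key2 L hL.2
  · intro L _
    rfl

lemma marked (r : ℕ) :
    (r : ℚ) * Er r = ∑ L ∈ splits (List.replicate r (1 : ℕ+)),
      ((L.length : ℚ) * ((L.map List.length).headI : ℚ)) * fC (L.map List.length) := by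
  rw [Er, Finset.mul_sum]
  have step1 : ∀ L ∈ splits (List.replicate r (1 : ℕ+)),
      (r : ℚ) * fC (L.map List.length) =
        (((L.map List.length).sum : ℚ)) * fC (L.map List.length) := by
    intro L hL
    rw [sum_map_length_of_splits hL, List.length_replicate]
  rw [Finset.sum_congr rfl step1]
  have hmaps : ∀ L ∈ splits (List.replicate r (1 : ℕ+)), L.length ∈ Finset.range (r + 1) := by
    intro L hL
    rw [Finset.mem_range]
    have := length_le_of_splits hL
    rw [List.length_replicate] at this
    omega
  rw [← Finset.sum_fiberwise_of_maps_to hmaps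
    (fun L => (((L.map List.length).sum : ℚ)) * fC (L.map List.length))]
  rw [← Finset.sum_fiberwise_of_maps_to hmaps
    (fun L => ((L.length : ℚ) * ((L.map List.length).headI : ℚ)) * fC (L.map List.length))]
  refine Finset.sum_congr rfl fun n _ => ?_
  -- fixed fiber
  set S := (splits (List.replicate r (1 : ℕ+))).filter (fun L => L.length = n) with hS
  have e1 : ∀ L ∈ S, (((L.map List.length).sum : ℚ)) * fC (L.map List.length) =
      ∑ j ∈ Finset.range n, ((L.map List.length).getD j 0 : ℚ) * fC (L.map List.length) := by
    intro L hL
    rw [Finset.mem_filter] at hL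
    have hlen : (L.map List.length).length = n := by rw [List.length_map, hL.2]
    rw [sum_eq_range_getD, ← hlen]
    push_cast
    rw [Finset.sum_mul]
  rw [Finset.sum_congr rfl e1, Finset.sum_comm]
  have e2 : ∀ j ∈ Finset.range n,
      (∑ L ∈ S, ((L.map List.length).getD j 0 : ℚ) * fC (L.map List.length)) =
      ∑ L ∈ S, ((L.map List.length).headI : ℚ) * fC (L.map List.length) := by
    intro j hj
    rw [Finset.mem_range] at hj
    have e3 : ∀ L ∈ S, ((L.map List.length).getD j 0 : ℚ) * fC (L.map List.length) =
        (((L.rotate j).map List.length).headI : ℚ) * fC ((L.rotate j).map List.length) := by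
      intro L hL
      rw [Finset.mem_filter] at hL
      have hlen : (L.map List.length).length = n := by rw [List.length_map, hL.2]
      rw [List.map_rotate, headI_rotate _ j (by rw [hlen]; exact hj), fC_rotate]
    rw [Finset.sum_congr rfl e3]
    exact sum_rotate_fiber r n j (fun L => ((L.map List.length).headI : ℚ) * fC (L.map List.length))
  rw [Finset.sum_congr rfl e2]
  rw [Finset.sum_const, Finset.card_range, Finset.smul_sum]
  refine Finset.sum_congr rfl fun L hL => ?_
  rw [Finset.mem_filter] at hL
  rw [nsmul_eq_mul, hL.2]
  ring

lemma Er_zero : Er 0 = 1 := by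
  rw [Er]
  rw [show List.replicate 0 (1 : ℕ+) = [] from rfl]
  rw [show splits [] = {[]} from by rw [splits]]
  rw [Finset.sum_singleton]
  simp [fC]

lemma Er_rec (r : ℕ) : ((r + 1 : ℕ) : ℚ) * Er (r + 1) =
    ∑ i ∈ Finset.range (r + 1), (-1 : ℚ) ^ i * Er (r - i) := by
  rw [marked (r + 1)]
  have e0 : ∀ L ∈ splits (List.replicate (r + 1) (1 : ℕ+)),
      ((L.length : ℚ) * ((L.map List.length).headI : ℚ)) * fC (L.map List.length) =
      (fun c : List ℕ => ((c.length : ℚ) * (c.headI : ℚ)) * fC c) (L.map List.length) := by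
    intro L _
    simp [List.length_map]
  rw [Finset.sum_congr rfl e0]
  rw [show List.replicate (r + 1) (1 : ℕ+) = (1 : ℕ+) :: List.replicate r (1 : ℕ+) from
    List.replicate_succ]
  refine (sum_splits_cons (1 : ℕ+) (List.replicate r (1 : ℕ+))
    (fun c : List ℕ => ((c.length : ℚ) * (c.headI : ℚ)) * fC c)).trans ?_
  rw [List.length_replicate]
  refine Finset.sum_congr rfl fun i hi => ?_
  rw [List.drop_replicate]
  have e1 : ∀ L' ∈ splits (List.replicate (r - i) (1 : ℕ+)),
      (fun c : List ℕ => ((c.length : ℚ) * (c.headI : ℚ)) * fC c) ((i + 1) :: L'.map List.length) =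
      (-1 : ℚ) ^ i * fC (L'.map List.length) := by
    intro L' _
    set c : List ℕ := L'.map List.length
    show ((((i + 1 : ℕ) :: c).length : ℚ) * (((i + 1 : ℕ) :: c).headI : ℚ)) * fC ((i + 1) :: c) =
      (-1 : ℚ) ^ i * fC c
    rw [fC, fC]
    simp only [List.length_cons, List.map_cons, List.prod_cons, List.headI]
    rw [show gq (i + 1) = (-1 : ℚ) ^ i / (i + 1) by rw [gq]; norm_num]
    have hfac : ((Nat.factorial (c.length + 1) : ℚ)) = ((c.length : ℚ) + 1) * (Nat.factorial c.length : ℚ) := by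
      rw [Nat.factorial_succ]
      push_cast
      ring
    rw [hfac]
    have h1 : ((c.length : ℚ) + 1) ≠ 0 := by positivity
    have h2 : ((i : ℚ) + 1) ≠ 0 := by positivity
    have h3 : ((Nat.factorial c.length : ℚ)) ≠ 0 := by
      exact_mod_cast Nat.factorial_ne_zero c.length
    field_simp
    push_cast
    ring
  rw [Finset.sum_congr rfl e1, ← Finset.mul_sum, ← Er]

lemma Er_one : Er 1 = 1 := by
  have h := Er_rec 0
  simp [Er_zero] at h
  exact h

lemma Er_ge_two : ∀ r : ℕ, 2 ≤ r → Er r = 0 := by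
  intro r
  induction r using Nat.strong_induction_on with
  | _ r ih =>
    intro hr
    obtain ⟨k, rfl⟩ : ∃ k, r = k + 2 := ⟨r - 2, by omega⟩
    have h := Er_rec (k + 1)
    rw [Finset.sum_range_succ, Finset.sum_range_succ] at h
    have hz : (∑ i ∈ Finset.range k, (-1 : ℚ) ^ i * Er (k + 1 - i)) = 0 := by
      apply Finset.sum_eq_zero
      intro i hi
      rw [Finset.mem_range] at hi
      rw [ih (k + 1 - i) (by omega) (by omega), mul_zero]
    rw [hz] at h
    rw [show k + 1 - k = 1 by omega, show k + 1 - (k + 1) = 0 by omega, Er_one, Er_zero] at h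
    have h0 : ((k + 2 : ℕ) : ℚ) * Er (k + 2) = 0 := by
      rw [show ((k+1+1 : ℕ) : ℚ) = ((k+2 : ℕ) : ℚ) by push_cast; ring] at h
      rw [show k + 1 + 1 = k + 2 by omega] at h
      rw [h, pow_succ]
      ring
    have hne : ((k + 2 : ℕ) : ℚ) ≠ 0 := by positivity
    rcases mul_eq_zero.mp h0 with hc | hc
    · exact absurd hc hne
    · exact hc

lemma sum_fC_eq_Er (w : Word) :
    (∑ L ∈ splits w, fC (L.map List.length)) = Er w.length := by
  rw [Er]
  exact splits_sum_length w.length w (List.replicate w.length (1 : ℕ+)) rfl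
    List.length_replicate fC

lemma sum_fC_eval (w : Word) (hw : w ≠ []) :
    (∑ L ∈ splits w, fC (L.map List.length)) = if w.length = 1 then 1 else 0 := by
  rw [sum_fC_eq_Er]
  have h0 : w.length ≠ 0 := fun h => hw (List.length_eq_zero_iff.mp h)
  by_cases h1 : w.length = 1
  · rw [if_pos h1, h1, Er_one]
  · rw [if_neg h1]
    exact Er_ge_two w.length (by omega)

lemma weight_flatten : ∀ L : List Word, weight L.flatten = (L.map weight).sum := by
  intro L
  induction L with
  | nil => rfl
  | cons u L' ih =>
    simp only [List.flatten_cons, weight_append, List.map_cons, List.sum_cons, ih]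

lemma weight_eq_sum_val : ∀ c : Word, weight c = (c.map PNat.val).sum := by
  intro c
  induction c with
  | nil => rfl
  | cons a c ih => rw [weight_cons, List.map_cons, List.sum_cons, ih]

lemma profile_inv : ∀ (c : Word) (L : List Word), L.map weight = c.map PNat.val →
    L.map (fun u => (weight u).toPNat') = c := by
  intro c
  induction c with
  | nil =>
    intro L h
    simp only [List.map_nil] at h
    rw [List.map_eq_nil_iff.mp h]
    rfl
  | cons m c' ih =>
    intro L h
    cases L with
    | nil => simp at h
    | cons u L' =>
      simp only [List.map_cons, List.cons.injEq] at h ⊢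
      constructor
      · apply PNat.coe_injective
        rw [Nat.toPNat'_coe, if_pos (h.1 ▸ m.pos), h.1]
      · exact ih L' h.2

lemma sum_pred_lengths : ∀ L : List Word, (∀ u ∈ L, u ≠ []) →
    (L.map (fun u => u.length - 1)).sum = (L.map List.length).sum - L.length := by
  intro L
  induction L with
  | nil => simp
  | cons u L' ih =>
    intro h
    have hu : 0 < u.length := List.length_pos_iff.mpr (h u (by simp))
    have h2 := ih (fun x hx => h x (by simp [hx]))
    have h3 := length_le_sum_lengths L' (fun x hx => h x (by simp [hx]))
    simp only [List.map_cons, List.sum_cons, List.length_cons]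
    omega

lemma prod_pc (q : R) [Algebra ℚ R] : ∀ L : List Word,
    (L.map (fun u => ((-1 : ℚ) ^ (u.length - 1) / u.length) • (q ^ (u.length - 1)))).prod =
      ((L.map (fun u => ((-1 : ℚ) ^ (u.length - 1) / (u.length : ℚ)))).prod) •
        q ^ ((L.map (fun u => u.length - 1)).sum) := by
  intro L
  induction L with
  | nil => simp
  | cons u L' ih =>
    simp only [List.map_cons, List.prod_cons, List.sum_cons, ih]
    rw [smul_mul_smul_comm, pow_add]

lemma stepA [Algebra ℚ R] (q : R) (s : ℕ+) (w : Word) (n : ℕ) :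
    (∑ c ∈ (wordsOfWeight (s : ℕ)).filter (fun c => c.length = n),
      ∑ L ∈ (splits w).filter (fun L => L.map weight = c.map PNat.val),
        (L.map (fun u => ((-1 : ℚ) ^ (u.length - 1) / u.length) • (q ^ (u.length - 1)))).prod) =
    ∑ L ∈ (splits w).filter (fun L => weight w = (s : ℕ) ∧ L.length = n),
      (L.map (fun u => ((-1 : ℚ) ^ (u.length - 1) / u.length) • (q ^ (u.length - 1)))).prod := by
  have hdisj : (↑((wordsOfWeight (s : ℕ)).filter (fun c => c.length = n)) :
      Set Word).PairwiseDisjoint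
      (fun c => (splits w).filter (fun L => L.map weight = c.map PNat.val)) := by
    intro x _ y _ hxy
    rw [Function.onFun, Finset.disjoint_left]
    intro L hLx hLy
    rw [Finset.mem_filter] at hLx hLy
    apply hxy
    have h1 : x.map PNat.val = y.map PNat.val := by rw [← hLx.2, hLy.2]
    exact List.map_injective_iff.mpr PNat.coe_injective h1
  rw [← Finset.sum_biUnion hdisj]
  congr 1
  apply Finset.ext
  intro L
  rw [Finset.mem_biUnion]
  constructor
  · rintro ⟨c, hc, hL⟩
    rw [Finset.mem_filter] at hc hL
    obtain ⟨hcw, hcl⟩ := hc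
    obtain ⟨hLs, hLp⟩ := hL
    have hmem := (mem_splits' w L).mp hLs
    rw [Finset.mem_filter]
    refine ⟨hLs, ?_, ?_⟩
    · rw [← hmem.1, weight_flatten]
      rw [show (L.map weight).sum = (c.map PNat.val).sum from congrArg List.sum hLp]
      rw [← weight_eq_sum_val]
      exact (mem_wordsOfWeight _ c).mp hcw
    · have := congrArg List.length hLp
      simp only [List.length_map] at this
      rw [this, hcl]
  · intro hL
    rw [Finset.mem_filter] at hL
    obtain ⟨hLs, hww, hLl⟩ := hL
    have hmem := (mem_splits' w L).mp hLs
    have hprof : (L.map (fun u => (weight u).toPNat')).map PNat.val = L.map weight := by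
      rw [List.map_map]
      apply List.map_congr_left
      intro u hu
      show ((weight u).toPNat' : ℕ) = weight u
      rw [Nat.toPNat'_coe, if_pos (show 0 < weight u from one_le_weight (hmem.2 u hu))]
    refine ⟨L.map (fun u => (weight u).toPNat'), ?_, ?_⟩
    · rw [Finset.mem_filter]
      constructor
      · rw [mem_wordsOfWeight, weight_eq_sum_val, hprof]
        rw [← weight_flatten, hmem.1, hww]
      · rw [List.length_map, hLl]
    · rw [Finset.mem_filter]
      exact ⟨hLs, hprof.symm⟩

lemma weight_single (s : ℕ+) : weight [s] = (s : ℕ) := by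
  rw [weight_cons, weight_nil, Nat.add_zero]

theorem letter_expansion_pi1' [Algebra ℚ R] (q : R) (s : ℕ+) :
    Finsupp.single [s] (1 : R) =
      ∑ n ∈ Finset.Icc 1 (s : ℕ),
        ((1 : ℚ) / n.factorial) • (q ^ (n - 1) •
          ∑ c ∈ (wordsOfWeight (s : ℕ)).filter (fun c => c.length = n),
            concList (c.map (fun m => qpi1 q [m]))) := by
  apply Finsupp.ext
  intro w
  rw [Finsupp.finset_sum_apply]
  have e1 : ∀ n ∈ Finset.Icc 1 (s : ℕ),
      (((1 : ℚ) / n.factorial) • (q ^ (n - 1) •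
        ∑ c ∈ (wordsOfWeight (s : ℕ)).filter (fun c => c.length = n),
          concList (c.map (fun m => qpi1 q [m])))) w
      = ((1 : ℚ) / n.factorial) • (q ^ (n - 1) •
          ∑ L ∈ (splits w).filter (fun L => weight w = (s : ℕ) ∧ L.length = n),
            (L.map (fun u => ((-1 : ℚ) ^ (u.length - 1) / u.length) •
              (q ^ (u.length - 1)))).prod) := by
    intro n _
    rw [Finsupp.smul_apply, Finsupp.smul_apply, Finsupp.finset_sum_apply]
    rw [Finset.sum_congr rfl (fun c _ => concList_apply q c w)]
    rw [stepA q s w n]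
  rw [Finset.sum_congr rfl e1]
  by_cases hw : weight w = (s : ℕ)
  · -- main case
    have hvne : w ≠ [] := by
      intro h
      subst h
      rw [weight_nil] at hw
      have := s.pos
      omega
    have e3 : ∀ n ∈ Finset.Icc 1 (s : ℕ),
        ((1 : ℚ) / n.factorial) • (q ^ (n - 1) •
          ∑ L ∈ (splits w).filter (fun L => weight w = (s : ℕ) ∧ L.length = n),
            (L.map (fun u => ((-1 : ℚ) ^ (u.length - 1) / u.length) •
              (q ^ (u.length - 1)))).prod)
        = ∑ L ∈ (splits w).filter (fun L => L.length = n),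
            ((1 : ℚ) / (L.length).factorial) • (q ^ (L.length - 1) •
              (L.map (fun u => ((-1 : ℚ) ^ (u.length - 1) / u.length) •
                (q ^ (u.length - 1)))).prod) := by
      intro n _
      rw [Finset.filter_congr (fun L _ => by simp [hw] :
        ∀ L ∈ splits w, (weight w = (s : ℕ) ∧ L.length = n) ↔ (L.length = n))]
      rw [Finset.smul_sum, Finset.smul_sum]
      refine Finset.sum_congr rfl fun L hL => ?_
      rw [Finset.mem_filter] at hL
      rw [hL.2]
    rw [Finset.sum_congr rfl e3]
    have hmaps : ∀ L ∈ splits w, L.length ∈ Finset.Icc 1 (s : ℕ) := by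
      intro L hL
      have hmem := (mem_splits' w L).mp hL
      have h1 : L ≠ [] := by
        intro h
        subst h
        exact hvne hmem.1.symm
      have h2 := length_le_of_splits hL
      have h3 := length_le_weight w
      rw [Finset.mem_Icc]
      exact ⟨List.length_pos_iff.mpr h1, by omega⟩
    rw [Finset.sum_fiberwise_of_maps_to hmaps
      (fun L => ((1 : ℚ) / (L.length).factorial) • (q ^ (L.length - 1) •
        (L.map (fun u => ((-1 : ℚ) ^ (u.length - 1) / u.length) •
          (q ^ (u.length - 1)))).prod))]
    have stepC : ∀ L ∈ splits w,
        ((1 : ℚ) / (L.length).factorial) • (q ^ (L.length - 1) •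
          (L.map (fun u => ((-1 : ℚ) ^ (u.length - 1) / u.length) •
            (q ^ (u.length - 1)))).prod)
        = fC (L.map List.length) • q ^ (w.length - 1) := by
      intro L hL
      have hmem := (mem_splits' w L).mp hL
      have h1 : L ≠ [] := fun h => hvne (by rw [← hmem.1, h]; rfl)
      have hlen1 : 1 ≤ L.length := List.length_pos_iff.mpr h1
      have hsum := sum_map_length_of_splits hL
      have hpred := sum_pred_lengths L hmem.2
      have hle := length_le_sum_lengths L hmem.2
      rw [prod_pc q L]
      rw [smul_eq_mul, mul_smul_comm, ← pow_add]
      rw [smul_smul]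
      rw [show L.length - 1 + (L.map (fun u => u.length - 1)).sum = w.length - 1 by omega]
      congr 1
      rw [fC, List.length_map, List.map_map]
      rfl
    rw [Finset.sum_congr rfl stepC, ← Finset.sum_smul, sum_fC_eval w hvne]
    rw [Finsupp.single_apply]
    by_cases hws : [s] = w
    · rw [if_pos hws, ← hws]
      rw [show ([s] : Word).length = 1 from rfl, if_pos rfl]
      simp
    · rw [if_neg hws, if_neg, zero_smul]
      intro h1
      obtain ⟨a, rfl⟩ := List.length_eq_one_iff.mp h1
      apply hws
      congr 1
      apply PNat.coe_injective
      rw [← hw, weight_single]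
  · -- weight w ≠ s : both sides vanish
    have hz : ∀ n ∈ Finset.Icc 1 (s : ℕ),
        ((1 : ℚ) / n.factorial) • (q ^ (n - 1) •
          ∑ L ∈ (splits w).filter (fun L => weight w = (s : ℕ) ∧ L.length = n),
            (L.map (fun u => ((-1 : ℚ) ^ (u.length - 1) / u.length) •
              (q ^ (u.length - 1)))).prod) = 0 := by
      intro n _
      rw [Finset.filter_false_of_mem (fun L _ h => hw h.1), Finset.sum_empty,
        smul_zero, smul_zero]
    rw [Finset.sum_congr rfl hz, Finset.sum_const, smul_zero]
    rw [Finsupp.single_apply, if_neg]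
    intro h
    apply hw
    rw [← h, weight_single]

/-- For every letter `y_s`,
`y_s = Σ_{k≥1} (q^{k-1}/k!) Σ_{s'_1+⋯+s'_k = s, s'_i ≥ 1} π₁(y_{s'_1}) ⋯ π₁(y_{s'_k})`. -/
theorem letter_expansion_pi1 [Algebra ℚ R] (q : R) (s : ℕ+) :
    Finsupp.single [s] (1 : R) =
      ∑ n ∈ Finset.Icc 1 (s : ℕ),
        ((1 : ℚ) / n.factorial) • (q ^ (n - 1) •
          ∑ c ∈ (wordsOfWeight (s : ℕ)).filter (fun c => c.length = n),
            concList (c.map (fun m => qpi1 q [m]))) := by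
  exact letter_expansion_pi1' q s
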